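/- For every ν ∈ S¹, every t > 0 and all integers M, M′ ≥ 1 it holds that m_{[0,M+M′−1]}(u_{0,ν}, Q_ν(0,t)) ≥ m_{[0,M−1]}(u_{0,ν}, Q_ν(0,t)) + m_{[0,M′−1]}(u_{0,ν}, Q_ν(0,t)). -/

import Mathlib

open scoped ENNReal Classical
open Filter

/-- The canonical embedding of `ℤ³` into Euclidean `ℝ³`. -/
noncomputable def toR3 (x : ℤ × ℤ × ℤ) : EuclideanSpace ℝ (Fin 3) :=
  (WithLp.equiv 2 (Fin 3 → ℝ)).symm ![(x.1 : ℝ), (x.2.1 : ℝ), (x.2.2 : ℝ)]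

/-- The canonical embedding of `ℤ²` into Euclidean `ℝ²`. -/
noncomputable def toR2 (x : ℤ × ℤ) : EuclideanSpace ℝ (Fin 2) :=
  (WithLp.equiv 2 (Fin 2 → ℝ)).symm ![(x.1 : ℝ), (x.2 : ℝ)]

/-- The projection `P₂ : ℤ³ → ℤ²` onto the first two coordinates. -/
def P2z (x : ℤ × ℤ × ℤ) : ℤ × ℤ := (x.1, x.2.1)

/-- The rotation of `ν` by `π/2`, giving the second side direction of the square `Q_ν`. -/
noncomputable def rotDir (ν : EuclideanSpace ℝ (Fin 2)) : EuclideanSpace ℝ (Fin 2) :=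
  (WithLp.equiv 2 (Fin 2 → ℝ)).symm ![-(ν 1), ν 0]

/-- The open square `Q_ν(0,t) ⊂ ℝ²` centered at `0` with side length `t` and one pair of
sides orthogonal to `ν`. -/
noncomputable def sqQ (ν : EuclideanSpace ℝ (Fin 2)) (t : ℝ) :
    Set (EuclideanSpace ℝ (Fin 2)) :=
  {x | |@inner ℝ _ _ x ν| < t / 2 ∧ |@inner ℝ _ _ x (rotDir ν)| < t / 2}

/-- The jump configuration `u_{0,ν}`: equal to `1` where `⟨x,ν⟩ ≥ 0` and `-1` elsewhere. -/
noncomputable def u0 (ν : EuclideanSpace ℝ (Fin 2)) (x : EuclideanSpace ℝ (Fin 2)) : ℝ :=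
  if 0 ≤ @inner ℝ _ _ x ν then 1 else -1

/-- The slab energy `E_{[N,M]}(u,O)`: sum of `c(x-y)|u(x)-u(y)|` over pairs
`x, y ∈ ℤ² × {N,…,M}` with `P₂x, P₂y ∈ O`. -/
noncomputable def Eslab (c : EuclideanSpace ℝ (Fin 3) → ℝ) (N M : ℤ)
    (u : ℤ × ℤ × ℤ → ℝ) (O : Set (EuclideanSpace ℝ (Fin 2))) : ℝ≥0∞ :=
  ∑' x : ℤ × ℤ × ℤ, ∑' y : ℤ × ℤ × ℤ,
    if N ≤ x.2.2 ∧ x.2.2 ≤ M ∧ N ≤ y.2.2 ∧ y.2.2 ≤ M ∧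
        toR2 (P2z x) ∈ O ∧ toR2 (P2z y) ∈ O then
      ENNReal.ofReal (c (toR3 x - toR3 y) * |u x - u y|) else 0

/-- Admissibility for the minimum problem on `Q_ν(0,t)`: `u` is `{±1}`-valued and agrees
with `u_{0,ν}∘P₂` at all points whose projection is within distance `2L` of `∂Q_ν(0,t)`. -/
def BCslab (L : ℝ) (ν : EuclideanSpace ℝ (Fin 2)) (t : ℝ) (u : ℤ × ℤ × ℤ → ℝ) : Prop :=
  (∀ x, u x = 1 ∨ u x = -1) ∧
  ∀ x : ℤ × ℤ × ℤ, Metric.infDist (toR2 (P2z x)) (frontier (sqQ ν t)) ≤ 2 * L →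
    u x = u0 ν (toR2 (P2z x))

/-- The minimum value `m_{[N,M]}(u_{0,ν}, Q_ν(0,t))`. -/
noncomputable def mSlab (c : EuclideanSpace ℝ (Fin 3) → ℝ) (L : ℝ)
    (ν : EuclideanSpace ℝ (Fin 2)) (N M : ℤ) (t : ℝ) : ℝ :=
  (⨅ u : {u : ℤ × ℤ × ℤ → ℝ // BCslab L ν t u}, Eslab c N M u (sqQ ν t)).toReal

-- shift equiv
def shiftE (k : ℤ) : (ℤ × ℤ × ℤ) ≃ (ℤ × ℤ × ℤ) where
  toFun x := (x.1, x.2.1, x.2.2 + k)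
  invFun x := (x.1, x.2.1, x.2.2 - k)
  left_inv x := by simp
  right_inv x := by simp

lemma toR3_shift_sub (k : ℤ) (x y : ℤ × ℤ × ℤ) :
    toR3 (shiftE k x) - toR3 (shiftE k y) = toR3 x - toR3 y := by
  ext i
  fin_cases i <;> simp [toR3, shiftE] <;> push_cast <;> ring

lemma Eslab_shift (c : EuclideanSpace ℝ (Fin 3) → ℝ) (M K : ℤ)
    (u : ℤ × ℤ × ℤ → ℝ) (O : Set (EuclideanSpace ℝ (Fin 2))) :
    Eslab c M K u O = Eslab c 0 (K - M) (fun x => u (shiftE M x)) O := by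
  unfold Eslab
  rw [← Equiv.tsum_eq (shiftE M)]
  refine tsum_congr fun x => ?_
  rw [← Equiv.tsum_eq (shiftE M)]
  refine tsum_congr fun y => ?_
  have hx2 : (shiftE M x).2.2 = x.2.2 + M := rfl
  have hy2 : (shiftE M y).2.2 = y.2.2 + M := rfl
  have hpx : P2z (shiftE M x) = P2z x := rfl
  have hpy : P2z (shiftE M y) = P2z y := rfl
  rw [toR3_shift_sub, hx2, hy2, hpx, hpy]
  refine if_congr ?_ rfl rfl
  constructor
  · rintro ⟨a1, a2, a3, a4, a5, a6⟩; exact ⟨by omega, by omega, by omega, by omega, a5, a6⟩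
  · rintro ⟨a1, a2, a3, a4, a5, a6⟩; exact ⟨by omega, by omega, by omega, by omega, a5, a6⟩

lemma Eslab_split (c : EuclideanSpace ℝ (Fin 3) → ℝ) (M K : ℤ) (hM : 1 ≤ M) (hK : M ≤ K)
    (u : ℤ × ℤ × ℤ → ℝ) (O : Set (EuclideanSpace ℝ (Fin 2))) :
    Eslab c 0 (M - 1) u O + Eslab c M K u O ≤ Eslab c 0 K u O := by
  unfold Eslab
  rw [← ENNReal.tsum_add]
  refine ENNReal.tsum_le_tsum fun x => ?_
  rw [← ENNReal.tsum_add]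
  refine ENNReal.tsum_le_tsum fun y => ?_
  set T := ENNReal.ofReal (c (toR3 x - toR3 y) * |u x - u y|) with hT
  by_cases h1 : (0 ≤ x.2.2 ∧ x.2.2 ≤ M - 1 ∧ 0 ≤ y.2.2 ∧ y.2.2 ≤ M - 1 ∧
      toR2 (P2z x) ∈ O ∧ toR2 (P2z y) ∈ O)
  · obtain ⟨a1, a2, a3, a4, a5, a6⟩ := h1
    have h2 : ¬(M ≤ x.2.2 ∧ x.2.2 ≤ K ∧ M ≤ y.2.2 ∧ y.2.2 ≤ K ∧
        toR2 (P2z x) ∈ O ∧ toR2 (P2z y) ∈ O) := by rintro ⟨b1, -⟩; omega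
    have hb : (0 ≤ x.2.2 ∧ x.2.2 ≤ K ∧ 0 ≤ y.2.2 ∧ y.2.2 ≤ K ∧
        toR2 (P2z x) ∈ O ∧ toR2 (P2z y) ∈ O) := ⟨a1, by omega, a3, by omega, a5, a6⟩
    have h1' : (0 ≤ x.2.2 ∧ x.2.2 ≤ M - 1 ∧ 0 ≤ y.2.2 ∧ y.2.2 ≤ M - 1 ∧
        toR2 (P2z x) ∈ O ∧ toR2 (P2z y) ∈ O) := ⟨a1, a2, a3, a4, a5, a6⟩
    rw [if_pos h1', if_neg h2, if_pos hb, add_zero]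
  · rw [if_neg h1, zero_add]
    by_cases h2 : (M ≤ x.2.2 ∧ x.2.2 ≤ K ∧ M ≤ y.2.2 ∧ y.2.2 ≤ K ∧
        toR2 (P2z x) ∈ O ∧ toR2 (P2z y) ∈ O)
    · obtain ⟨b1, b2, b3, b4, b5, b6⟩ := h2
      have hb : (0 ≤ x.2.2 ∧ x.2.2 ≤ K ∧ 0 ≤ y.2.2 ∧ y.2.2 ≤ K ∧
          toR2 (P2z x) ∈ O ∧ toR2 (P2z y) ∈ O) := ⟨by omega, b2, by omega, b4, b5, b6⟩
      have h2' : (M ≤ x.2.2 ∧ x.2.2 ≤ K ∧ M ≤ y.2.2 ∧ y.2.2 ≤ K ∧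
          toR2 (P2z x) ∈ O ∧ toR2 (P2z y) ∈ O) := ⟨b1, b2, b3, b4, b5, b6⟩
      rw [if_pos h2', if_pos hb]
    · rw [if_neg h2]; exact zero_le

lemma sqQ_lattice_finite (ν : EuclideanSpace ℝ (Fin 2)) (hν : ‖ν‖ = 1) (t : ℝ) :
    {p : ℤ × ℤ | toR2 p ∈ sqQ ν t}.Finite := by
  have hn : ν 0 ^ 2 + ν 1 ^ 2 = 1 := by
    have := real_inner_self_eq_norm_sq ν
    rw [hν] at this
    simp only [PiLp.inner_apply, Fin.sum_univ_two, RCLike.inner_apply, conj_trivial,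
      one_pow] at this
    linarith [this]
  have h0 : |ν 0| ≤ 1 := by
    rw [abs_le_one_iff_mul_self_le_one]; nlinarith [sq_nonneg (ν 1)]
  have h1 : |ν 1| ≤ 1 := by
    rw [abs_le_one_iff_mul_self_le_one]; nlinarith [sq_nonneg (ν 0)]
  have key : ∀ p : ℤ × ℤ, toR2 p ∈ sqQ ν t → |(p.1 : ℝ)| < t ∧ |(p.2 : ℝ)| < t := by
    intro p hp
    obtain ⟨ha, hb⟩ := hp
    set a := @inner ℝ _ _ (toR2 p) ν with hadef
    set b := @inner ℝ _ _ (toR2 p) (rotDir ν) with hbdef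
    have haf : a = (p.1 : ℝ) * ν 0 + (p.2 : ℝ) * ν 1 := by
      simp [hadef, toR2, PiLp.inner_apply, Fin.sum_univ_two]; ring
    have hbf : b = -(p.1 : ℝ) * ν 1 + (p.2 : ℝ) * ν 0 := by
      simp [hbdef, toR2, rotDir, PiLp.inner_apply, Fin.sum_univ_two]; ring
    have hp1 : (p.1 : ℝ) = a * ν 0 - b * ν 1 := by
      rw [haf, hbf]; linear_combination (-(p.1 : ℝ)) * hn
    have hp2 : (p.2 : ℝ) = a * ν 1 + b * ν 0 := by
      rw [haf, hbf]; linear_combination (-(p.2 : ℝ)) * hn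
    constructor
    · calc |(p.1 : ℝ)| = |a * ν 0 - b * ν 1| := by rw [hp1]
        _ ≤ |a * ν 0| + |b * ν 1| := abs_sub _ _
        _ = |a| * |ν 0| + |b| * |ν 1| := by rw [abs_mul, abs_mul]
        _ ≤ |a| * 1 + |b| * 1 :=
            add_le_add (mul_le_mul_of_nonneg_left h0 (abs_nonneg a))
              (mul_le_mul_of_nonneg_left h1 (abs_nonneg b))
        _ < t := by simp only [mul_one]; linarith
    · calc |(p.2 : ℝ)| = |a * ν 1 + b * ν 0| := by rw [hp2]
        _ ≤ |a * ν 1| + |b * ν 0| := abs_add_le _ _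
        _ = |a| * |ν 1| + |b| * |ν 0| := by rw [abs_mul, abs_mul]
        _ ≤ |a| * 1 + |b| * 1 :=
            add_le_add (mul_le_mul_of_nonneg_left h1 (abs_nonneg a))
              (mul_le_mul_of_nonneg_left h0 (abs_nonneg b))
        _ < t := by simp only [mul_one]; linarith
  apply Set.Finite.subset ((Set.finite_Icc (-⌈t⌉) ⌈t⌉).prod (Set.finite_Icc (-⌈t⌉) ⌈t⌉))
  intro p hp
  obtain ⟨h1', h2'⟩ := key p hp
  have hc : (⌈t⌉ : ℝ) ≥ t := Int.le_ceil t
  constructor <;> constructor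
  · exact_mod_cast (by linarith [(abs_lt.mp h1').1] : -(⌈t⌉:ℝ) ≤ (p.1:ℝ))
  · exact_mod_cast (by linarith [(abs_lt.mp h1').2] : (p.1:ℝ) ≤ (⌈t⌉:ℝ))
  · exact_mod_cast (by linarith [(abs_lt.mp h2').1] : -(⌈t⌉:ℝ) ≤ (p.2:ℝ))
  · exact_mod_cast (by linarith [(abs_lt.mp h2').2] : (p.2:ℝ) ≤ (⌈t⌉:ℝ))

lemma Eslab_ne_top (c : EuclideanSpace ℝ (Fin 3) → ℝ) (N K : ℤ)
    (u : ℤ × ℤ × ℤ → ℝ) (ν : EuclideanSpace ℝ (Fin 2)) (hν : ‖ν‖ = 1) (t : ℝ) :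
    Eslab c N K u (sqQ ν t) ≠ ⊤ := by
  have hS := sqQ_lattice_finite ν hν t
  have hT : {x : ℤ × ℤ × ℤ | N ≤ x.2.2 ∧ x.2.2 ≤ K ∧ toR2 (P2z x) ∈ sqQ ν t}.Finite := by
    have hsub : {x : ℤ × ℤ × ℤ | N ≤ x.2.2 ∧ x.2.2 ≤ K ∧ toR2 (P2z x) ∈ sqQ ν t} ⊆
        (fun q : (ℤ × ℤ) × ℤ => (q.1.1, q.1.2, q.2)) ''
          ({p : ℤ × ℤ | toR2 p ∈ sqQ ν t} ×ˢ Set.Icc N K) := by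
      rintro ⟨a, b, k⟩ ⟨h1, h2, h3⟩
      exact ⟨((a, b), k), ⟨h3, h1, h2⟩, rfl⟩
    exact ((hS.prod (Set.finite_Icc N K)).image _).subset hsub
  set T := {x : ℤ × ℤ × ℤ | N ≤ x.2.2 ∧ x.2.2 ≤ K ∧ toR2 (P2z x) ∈ sqQ ν t} with hTdef
  unfold Eslab
  have hzero : ∀ x y : ℤ × ℤ × ℤ, x ∉ T ∨ y ∉ T →
      (if N ≤ x.2.2 ∧ x.2.2 ≤ K ∧ N ≤ y.2.2 ∧ y.2.2 ≤ K ∧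
          toR2 (P2z x) ∈ sqQ ν t ∧ toR2 (P2z y) ∈ sqQ ν t then
        ENNReal.ofReal (c (toR3 x - toR3 y) * |u x - u y|) else 0) = 0 := by
    rintro x y (hx | hy)
    · exact if_neg fun h => hx ⟨h.1, h.2.1, h.2.2.2.2.1⟩
    · exact if_neg fun h => hy ⟨h.2.2.1, h.2.2.2.1, h.2.2.2.2.2⟩
  have hinner : ∀ x : ℤ × ℤ × ℤ,
      (∑' y : ℤ × ℤ × ℤ, if N ≤ x.2.2 ∧ x.2.2 ≤ K ∧ N ≤ y.2.2 ∧ y.2.2 ≤ K ∧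
          toR2 (P2z x) ∈ sqQ ν t ∧ toR2 (P2z y) ∈ sqQ ν t then
        ENNReal.ofReal (c (toR3 x - toR3 y) * |u x - u y|) else 0) ≠ ⊤ := by
    intro x
    rw [tsum_eq_sum (s := hT.toFinset) (fun y hy => hzero x y (Or.inr (by
      simpa using hy)))]
    refine (ENNReal.sum_lt_top.2 fun y _ => ?_).ne
    split
    · exact ENNReal.ofReal_lt_top
    · simp
  rw [tsum_eq_sum (s := hT.toFinset) (fun x hx => by
    have hz : ∀ y : ℤ × ℤ × ℤ, (if N ≤ x.2.2 ∧ x.2.2 ≤ K ∧ N ≤ y.2.2 ∧ y.2.2 ≤ K ∧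
        toR2 (P2z x) ∈ sqQ ν t ∧ toR2 (P2z y) ∈ sqQ ν t then
      ENNReal.ofReal (c (toR3 x - toR3 y) * |u x - u y|) else 0) = 0 :=
      fun y => hzero x y (Or.inl (by simpa using hx))
    simp only [hz, tsum_zero])]
  exact (ENNReal.sum_lt_top.2 fun x _ => (hinner x).lt_top).ne

lemma BCslab_shift (L : ℝ) (ν : EuclideanSpace ℝ (Fin 2)) (t : ℝ) (k : ℤ)
    (u : ℤ × ℤ × ℤ → ℝ) (hu : BCslab L ν t u) :
    BCslab L ν t (fun x => u (shiftE k x)) :=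
  ⟨fun x => hu.1 _, fun x hx => hu.2 (shiftE k x) hx⟩

lemma BCslab_star (L : ℝ) (ν : EuclideanSpace ℝ (Fin 2)) (t : ℝ) :
    BCslab L ν t (fun x => u0 ν (toR2 (P2z x))) :=
  ⟨fun x => by simp only [u0]; split <;> simp, fun x _ => rfl⟩

/-- **Superadditivity in the number of layers**: for every `ν ∈ S¹`, `t > 0` and integers
`M, M′ ≥ 1`, `m_{[0,M+M′−1]}(u_{0,ν},Q_ν(0,t)) ≥ m_{[0,M−1]}(...) + m_{[0,M′−1]}(...)`. -/
theorem mSlab_superadditive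
    (L Cbar c0 : ℝ) (hL : 0 < L) (hCbar : 0 < Cbar) (hc0 : 0 < c0)
    (c : EuclideanSpace ℝ (Fin 3) → ℝ)
    (hc_nonneg : ∀ z, 0 ≤ c z)
    (hc_bd : ∀ z, c z ≤ Cbar)
    (hc_range : ∀ z : EuclideanSpace ℝ (Fin 3), L ≤ ‖z‖ → c z = 0)
    (hc_coer : ∀ z : EuclideanSpace ℝ (Fin 3), ‖z‖ = 1 → c0 ≤ c z)
    (ν : EuclideanSpace ℝ (Fin 2)) (hν : ‖ν‖ = 1)
    (t : ℝ) (ht : 0 < t)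
    (M M' : ℕ) (hM : 1 ≤ M) (hM' : 1 ≤ M') :
    mSlab c L ν 0 ((M : ℤ) + (M' : ℤ) - 1) t ≥
      mSlab c L ν 0 ((M : ℤ) - 1) t + mSlab c L ν 0 ((M' : ℤ) - 1) t := by
  have hstar : BCslab L ν t (fun x => u0 ν (toR2 (P2z x))) := BCslab_star L ν t
  unfold mSlab
  set a := ⨅ u : {u : ℤ × ℤ × ℤ → ℝ // BCslab L ν t u},
    Eslab c 0 ((M : ℤ) - 1) ↑u (sqQ ν t) with hadef
  set b := ⨅ u : {u : ℤ × ℤ × ℤ → ℝ // BCslab L ν t u},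
    Eslab c 0 ((M' : ℤ) - 1) ↑u (sqQ ν t) with hbdef
  set A := ⨅ u : {u : ℤ × ℤ × ℤ → ℝ // BCslab L ν t u},
    Eslab c 0 ((M : ℤ) + (M' : ℤ) - 1) ↑u (sqQ ν t) with hAdef
  have haT : a ≠ ⊤ :=
    ne_top_of_le_ne_top (Eslab_ne_top c 0 _ _ ν hν t) (iInf_le _ ⟨_, hstar⟩)
  have hbT : b ≠ ⊤ :=
    ne_top_of_le_ne_top (Eslab_ne_top c 0 _ _ ν hν t) (iInf_le _ ⟨_, hstar⟩)
  have hAT : A ≠ ⊤ :=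
    ne_top_of_le_ne_top (Eslab_ne_top c 0 _ _ ν hν t) (iInf_le _ ⟨_, hstar⟩)
  have hM1 : (1 : ℤ) ≤ (M : ℤ) := by exact_mod_cast hM
  have hM1' : (1 : ℤ) ≤ (M' : ℤ) := by exact_mod_cast hM'
  have hab : a + b ≤ A := by
    refine le_iInf ?_
    rintro ⟨u, hu⟩
    have hsh := Eslab_shift c (M : ℤ) ((M : ℤ) + (M' : ℤ) - 1) u (sqQ ν t)
    rw [show ((M : ℤ) + (M' : ℤ) - 1) - (M : ℤ) = (M' : ℤ) - 1 from by ring] at hsh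
    calc a + b ≤ Eslab c 0 ((M : ℤ) - 1) u (sqQ ν t) +
        Eslab c 0 ((M' : ℤ) - 1) (fun x => u (shiftE (M : ℤ) x)) (sqQ ν t) :=
          add_le_add (iInf_le (fun v : {u : ℤ × ℤ × ℤ → ℝ // BCslab L ν t u} =>
            Eslab c 0 ((M : ℤ) - 1) ↑v (sqQ ν t)) ⟨u, hu⟩)
            (iInf_le (fun v : {u : ℤ × ℤ × ℤ → ℝ // BCslab L ν t u} =>
            Eslab c 0 ((M' : ℤ) - 1) ↑v (sqQ ν t)) ⟨_, BCslab_shift L ν t (M : ℤ) u hu⟩)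
      _ = Eslab c 0 ((M : ℤ) - 1) u (sqQ ν t) +
          Eslab c (M : ℤ) ((M : ℤ) + (M' : ℤ) - 1) u (sqQ ν t) := by rw [hsh]
      _ ≤ Eslab c 0 ((M : ℤ) + (M' : ℤ) - 1) u (sqQ ν t) :=
          Eslab_split c (M : ℤ) ((M : ℤ) + (M' : ℤ) - 1) hM1 (by omega) u (sqQ ν t)
  rw [ge_iff_le, ← ENNReal.toReal_add haT hbT]
  exact ENNReal.toReal_mono hAT hab
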